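/- Fix β > 0. Then lim_{c→−1⁻} λ₁(β,c) = λ₁(β,−1), where for c ≤ −1, λ₁(β,c) = inf { ∫_{−1}^1 (|φ'|² − (β/(y−c))|φ|²) dy : φ ∈ H₀¹(−1,1), ‖φ‖_{L²} = 1 }. -/

import Mathlib

open MeasureTheory Real Set Filter

/-- The set of values of the Rayleigh–Kuo quadratic form
`∫_{-1}^1 (|φ'|² - (β/(y-c))|φ|²) dy` over `L²`-normalized `φ ∈ H₀¹(-1,1)`. -/
noncomputable def rayleighSet (β c : ℝ) : Set ℝ :=
  { r | ∃ φ dφ : ℝ → ℝ,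
      (∀ y, HasDerivAt φ (dφ y) y) ∧ φ (-1) = 0 ∧ φ 1 = 0 ∧
      IntervalIntegrable (fun y => dφ y ^ 2) volume (-1) 1 ∧
      IntervalIntegrable (fun y => β / (y - c) * φ y ^ 2) volume (-1) 1 ∧
      (∫ y in (-1:ℝ)..1, φ y ^ 2) = 1 ∧
      r = ∫ y in (-1:ℝ)..1, (dφ y ^ 2 - β / (y - c) * φ y ^ 2) }

/-- The principal eigenvalue `λ₁(β,c)` of the Rayleigh–Kuo boundary value problem,
defined variationally as the infimum of the quadratic form. -/
noncomputable def lambda1 (β c : ℝ) : ℝ := sInf (rayleighSet β c)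


open intervalIntegral

section aux
variable {φ dφ : ℝ → ℝ} {β : ℝ}

lemma cont_of_deriv (h : ∀ y, HasDerivAt φ (dφ y) y) : Continuous φ :=
  continuous_iff_continuousAt.2 fun y => (h y).continuousAt

lemma dphi_meas (h : ∀ y, HasDerivAt φ (dφ y) y) : Measurable dφ := by
  have : dφ = deriv φ := funext fun y => ((h y).deriv).symm
  rw [this]; exact measurable_deriv φ

lemma dphi_ii (h : ∀ y, HasDerivAt φ (dφ y) y)
    (hD : IntervalIntegrable (fun y => dφ y ^ 2) volume (-1) 1) :
    IntervalIntegrable dφ volume (-1) 1 := by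
  have hg : IntervalIntegrable (fun y => (1 + dφ y ^ 2) / 2) volume (-1) 1 := by
    have h1 : IntervalIntegrable (fun _ : ℝ => (1:ℝ)) volume (-1) 1 :=
      intervalIntegrable_const
    simpa using (h1.add hD).div_const 2
  refine hg.mono_fun ((dphi_meas h).aestronglyMeasurable.restrict) ?_
  refine Filter.Eventually.of_forall fun x => ?_
  simp only [Real.norm_eq_abs]
  have h1 : |dφ x| ≤ (1 + dφ x ^ 2) / 2 := by
    nlinarith [sq_nonneg (|dφ x| - 1), sq_abs (dφ x), abs_nonneg (dφ x)]
  have h2 : (0:ℝ) ≤ (1 + dφ x ^ 2) / 2 := by positivity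
  rw [abs_of_nonneg h2]; exact h1

lemma sq_le_of_deriv (h : ∀ y, HasDerivAt φ (dφ y) y) (hb : φ (-1) = 0)
    (hD : IntervalIntegrable (fun y => dφ y ^ 2) volume (-1) 1) :
    ∀ y ∈ Icc (-1:ℝ) 1, φ y ^ 2 ≤ (y + 1) * ∫ t in (-1:ℝ)..1, dφ t ^ 2 := by
  intro y hy
  rcases eq_or_lt_of_le hy.1 with heq | hlt
  · rw [← heq, hb]; norm_num
  have hsub : uIcc (-1:ℝ) y ⊆ uIcc (-1:ℝ) 1 := by
    rw [uIcc_of_le (le_of_lt hlt), uIcc_of_le (by norm_num : (-1:ℝ) ≤ 1)]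
    exact Icc_subset_Icc le_rfl hy.2
  have hdI : IntervalIntegrable dφ volume (-1) y := (dphi_ii h hD).mono_set hsub
  have hDI : IntervalIntegrable (fun t => dφ t ^ 2) volume (-1) y := hD.mono_set hsub
  set S : ℝ := ∫ t in (-1:ℝ)..y, dφ t with hS
  set T : ℝ := ∫ t in (-1:ℝ)..y, dφ t ^ 2 with hT
  have hftc : φ y = S := by
    rw [hS, intervalIntegral.integral_eq_sub_of_hasDerivAt (fun x _ => h x) hdI, hb, sub_zero]
  have hL : (0:ℝ) < y + 1 := by linarith
  set A : ℝ := S / (y + 1) with hA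
  have hexp : (0:ℝ) ≤ T - 2 * A * S + A ^ 2 * (y + 1) := by
    have hnn : (0:ℝ) ≤ ∫ t in (-1:ℝ)..y, (dφ t - A) ^ 2 :=
      intervalIntegral.integral_nonneg (le_of_lt hlt) (fun t _ => sq_nonneg _)
    have heq2 : ∫ t in (-1:ℝ)..y, (dφ t - A) ^ 2
        = T - 2 * A * S + A ^ 2 * (y + 1) := by
      have hrw : (fun t => (dφ t - A) ^ 2)
          = fun t => dφ t ^ 2 - (2 * A) * dφ t + A ^ 2 := by
        funext t; ring
      rw [hrw]
      rw [intervalIntegral.integral_add ((hDI.sub ((hdI.const_mul (2*A))))) intervalIntegrable_const]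
      rw [intervalIntegral.integral_sub hDI (hdI.const_mul (2*A))]
      rw [intervalIntegral.integral_const_mul, intervalIntegral.integral_const]
      rw [← hS, ← hT]
      simp only [smul_eq_mul]
      ring
    linarith [heq2 ▸ hnn]
  have hCS : S ^ 2 ≤ (y + 1) * T := by
    have : A = S / (y+1) := hA
    have h2 : 2 * A * S - A ^ 2 * (y + 1) = S ^ 2 / (y + 1) := by
      rw [hA]; field_simp; ring
    have h3 : S ^ 2 / (y + 1) ≤ T := by linarith
    calc S ^ 2 = (y + 1) * (S ^ 2 / (y + 1)) := by field_simp
    _ ≤ (y + 1) * T := by exact mul_le_mul_of_nonneg_left h3 (le_of_lt hL)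
  have hsub2 : uIcc y (1:ℝ) ⊆ uIcc (-1:ℝ) 1 := by
    rw [uIcc_of_le hy.2, uIcc_of_le (by norm_num : (-1:ℝ) ≤ 1)]
    exact Icc_subset_Icc hy.1 le_rfl
  have hTD : T ≤ ∫ t in (-1:ℝ)..1, dφ t ^ 2 := by
    have hsplit : T + (∫ t in y..(1:ℝ), dφ t ^ 2) = ∫ t in (-1:ℝ)..1, dφ t ^ 2 :=
      intervalIntegral.integral_add_adjacent_intervals hDI (hD.mono_set hsub2)
    have hnn : (0:ℝ) ≤ ∫ t in y..(1:ℝ), dφ t ^ 2 :=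
      intervalIntegral.integral_nonneg hy.2 (fun t _ => sq_nonneg _)
    linarith
  have hfin : (y + 1) * T ≤ (y + 1) * ∫ t in (-1:ℝ)..1, dφ t ^ 2 :=
    mul_le_mul_of_nonneg_left hTD (le_of_lt hL)
  rw [hftc]
  linarith

end aux

section aux2
variable {φ dφ : ℝ → ℝ} {β c : ℝ}

-- potential integrability at c = -1
lemma pot_int_neg_one (h : ∀ y, HasDerivAt φ (dφ y) y) (hb : φ (-1) = 0) :
    IntervalIntegrable (fun y => β / (y + 1) * φ y ^ 2) volume (-1) 1 := by
  have hcφ : Continuous φ := continuous_iff_continuousAt.2 fun y => (h y).continuousAt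
  have hco : ContinuousOn (fun y => β / (y + 1) * φ y ^ 2) (uIcc (-1:ℝ) 1) := by
    rw [uIcc_of_le (by norm_num : (-1:ℝ) ≤ 1)]
    have hrw : (fun y => β / (y + 1) * φ y ^ 2)
        = fun y => β * (φ y * slope φ (-1) y) := by
      funext y
      rcases eq_or_ne y (-1) with rfl | hy
      · simp [hb]
      · have : y + 1 ≠ 0 := fun hc => hy (by linarith)
        rw [slope_def_field, hb, sub_zero, sub_neg_eq_add]
        rw [show φ y * (φ y / (y + 1)) = φ y ^ 2 / (y + 1) by rw [pow_two, mul_div_assoc]]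
        rw [div_mul_eq_mul_div, mul_div_assoc]
    rw [hrw]
    intro x hx
    rcases eq_or_ne x (-1) with rfl | hx1
    · -- continuity within at -1
      rw [← continuousWithinAt_diff_self]
      have hmem : Icc (-1:ℝ) 1 \ {-1} ⊆ {(-1:ℝ)}ᶜ := fun z hz => hz.2
      have hslope : Tendsto (slope φ (-1)) (nhdsWithin (-1) {(-1:ℝ)}ᶜ) (nhds (dφ (-1))) :=
        hasDerivAt_iff_tendsto_slope.1 (h (-1))
      have hslope' : Tendsto (slope φ (-1)) (nhdsWithin (-1) (Icc (-1:ℝ) 1 \ {-1}))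
          (nhds (dφ (-1))) := hslope.mono_left (nhdsWithin_mono _ hmem)
      have hφt : Tendsto φ (nhdsWithin (-1) (Icc (-1:ℝ) 1 \ {-1})) (nhds 0) := by
        have := (hcφ.tendsto (-1)).mono_left (nhdsWithin_le_nhds (s := Icc (-1:ℝ) 1 \ {-1}))
        rwa [hb] at this
      have : Tendsto (fun y => β * (φ y * slope φ (-1) y))
          (nhdsWithin (-1) (Icc (-1:ℝ) 1 \ {-1})) (nhds (β * (0 * dφ (-1)))) :=
        (tendsto_const_nhds.mul (hφt.mul hslope'))
      unfold ContinuousWithinAt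
      have hval : β * ((0:ℝ) * dφ (-1)) = β * (φ (-1) * slope φ (-1) (-1)) := by
        simp [hb]
      rwa [hval] at this
    · have hne : x + 1 ≠ 0 := fun hc => hx1 (by linarith)
      have : ContinuousAt (fun y => β * (φ y * slope φ (-1) y)) x := by
        have hsl : ContinuousAt (fun y => slope φ (-1) y) x := by
          have hc2 : ContinuousAt (fun y => (φ y - φ (-1)) / (y - (-1))) x :=
            ((hcφ.continuousAt.sub continuousAt_const).div
              (continuousAt_id.sub continuousAt_const) (by simpa using hne))
          simp only [slope_def_field]
          exact hc2
        exact continuousAt_const.mul (hcφ.continuousAt.mul hsl)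
      exact this.continuousWithinAt
  exact hco.intervalIntegrable

-- potential integrability for c < -1
lemma pot_int_lt (hc : c < -1) (hcφ : Continuous φ) :
    IntervalIntegrable (fun y => β / (y - c) * φ y ^ 2) volume (-1) 1 := by
  apply ContinuousOn.intervalIntegrable
  rw [uIcc_of_le (by norm_num : (-1:ℝ) ≤ 1)]
  intro x hx
  have hne : x - c ≠ 0 := by have := hx.1; intro hcon; linarith [sub_eq_zero.1 hcon ▸ hc]
  exact (((continuousAt_const.div (continuousAt_id.sub continuousAt_const) hne).mul
    ((hcφ.continuousAt).pow 2))).continuousWithinAt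

end aux2

noncomputable def del0 (β : ℝ) : ℝ := min (1/(2*β)) 2

section aux3
variable {φ dφ : ℝ → ℝ} {β : ℝ}

lemma del0_pos (hβ : 0 < β) : 0 < del0 β := by
  apply lt_min (by positivity) (by norm_num)

lemma del0_le_two : del0 β ≤ 2 := min_le_right _ _

lemma beta_del0 (hβ : 0 < β) : β * del0 β ≤ 1/2 := by
  calc β * del0 β ≤ β * (1/(2*β)) := mul_le_mul_of_nonneg_left (min_le_left _ _) hβ.le
  _ = 1/2 := by field_simp

lemma pot_integral_le (h : ∀ y, HasDerivAt φ (dφ y) y) (hb : φ (-1) = 0)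
    (hD : IntervalIntegrable (fun y => dφ y ^ 2) volume (-1) 1)
    (hnorm : (∫ y in (-1:ℝ)..1, φ y ^ 2) = 1)
    (hβ : 0 < β) {δ : ℝ} (hδ0 : 0 < δ) (hδ2 : δ ≤ 2) :
    (∫ y in (-1:ℝ)..1, β / (y + 1) * φ y ^ 2)
      ≤ β * δ * (∫ t in (-1:ℝ)..1, dφ t ^ 2) + β / δ := by
  have hcφ : Continuous φ := continuous_iff_continuousAt.2 fun y => (h y).continuousAt
  set a : ℝ := -1 + δ with ha
  have ha1 : (-1:ℝ) ≤ a := by simp [ha]; linarith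
  have ha2 : a ≤ 1 := by simp [ha]; linarith
  have hpot : IntervalIntegrable (fun y => β / (y + 1) * φ y ^ 2) volume (-1) 1 :=
    pot_int_neg_one h hb
  have hsub1 : uIcc (-1:ℝ) a ⊆ uIcc (-1:ℝ) 1 := by
    rw [uIcc_of_le ha1, uIcc_of_le (by norm_num : (-1:ℝ) ≤ 1)]
    exact Icc_subset_Icc le_rfl ha2
  have hsub2 : uIcc a (1:ℝ) ⊆ uIcc (-1:ℝ) 1 := by
    rw [uIcc_of_le ha2, uIcc_of_le (by norm_num : (-1:ℝ) ≤ 1)]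
    exact Icc_subset_Icc ha1 le_rfl
  set D : ℝ := ∫ t in (-1:ℝ)..1, dφ t ^ 2 with hDdef
  have hD0 : 0 ≤ D := intervalIntegral.integral_nonneg (by norm_num) (fun t _ => sq_nonneg _)
  have hφ2 : IntervalIntegrable (fun y => φ y ^ 2) volume (-1) 1 :=
    ((hcφ.pow 2).continuousOn).intervalIntegrable
  -- piece 1
  have hp1 : (∫ y in (-1:ℝ)..a, β / (y + 1) * φ y ^ 2) ≤ δ * (β * D) := by
    have := intervalIntegral.integral_mono_on ha1 (hpot.mono_set hsub1)
      (_root_.intervalIntegrable_const (c := β * D)) ?_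
    · rw [intervalIntegral.integral_const, smul_eq_mul] at this
      calc (∫ y in (-1:ℝ)..a, β / (y + 1) * φ y ^ 2) ≤ (a - (-1)) * (β * D) := this
      _ = δ * (β * D) := by rw [ha]; ring_nf
    · intro y hy
      rcases eq_or_lt_of_le hy.1 with heq | hlt
      · rw [← heq, hb]
        simp
        positivity
      · have hL : (0:ℝ) < y + 1 := by linarith
        have hsq : φ y ^ 2 ≤ (y + 1) * D :=
          sq_le_of_deriv h hb hD y ⟨hy.1, le_trans hy.2 ha2⟩
        calc β / (y + 1) * φ y ^ 2 ≤ β / (y + 1) * ((y + 1) * D) :=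
              mul_le_mul_of_nonneg_left hsq (by positivity)
        _ = β * D := by field_simp
  -- piece 2
  have hp2 : (∫ y in a..(1:ℝ), β / (y + 1) * φ y ^ 2) ≤ β / δ := by
    have hmono := intervalIntegral.integral_mono_on ha2 (hpot.mono_set hsub2)
      ((hφ2.mono_set hsub2).const_mul (β/δ)) ?_
    · have hsplitφ : (∫ y in (-1:ℝ)..a, φ y ^ 2) + (∫ y in a..(1:ℝ), φ y ^ 2)
          = ∫ y in (-1:ℝ)..1, φ y ^ 2 :=
        intervalIntegral.integral_add_adjacent_intervals (hφ2.mono_set hsub1)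
          (hφ2.mono_set hsub2)
      have hnn1 : (0:ℝ) ≤ ∫ y in (-1:ℝ)..a, φ y ^ 2 :=
        intervalIntegral.integral_nonneg ha1 (fun t _ => sq_nonneg _)
      have h2 : (∫ y in a..(1:ℝ), φ y ^ 2) ≤ 1 := by rw [hnorm] at hsplitφ; linarith
      have h3 : (∫ y in a..(1:ℝ), (β/δ) * φ y ^ 2) = (β/δ) * ∫ y in a..(1:ℝ), φ y ^ 2 :=
        intervalIntegral.integral_const_mul _ _
      calc (∫ y in a..(1:ℝ), β / (y + 1) * φ y ^ 2)
          ≤ ∫ y in a..(1:ℝ), (β/δ) * φ y ^ 2 := hmono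
      _ = (β/δ) * ∫ y in a..(1:ℝ), φ y ^ 2 := h3
      _ ≤ (β/δ) * 1 := mul_le_mul_of_nonneg_left h2 (by positivity)
      _ = β / δ := mul_one _
    · intro y hy
      have hL : δ ≤ y + 1 := by have := hy.1; rw [ha] at this; linarith
      have hL0 : (0:ℝ) < y + 1 := lt_of_lt_of_le hδ0 hL
      have hdleδ : β / (y + 1) ≤ β / δ := by gcongr
      exact mul_le_mul_of_nonneg_right hdleδ (sq_nonneg _)
  -- combine
  have hsplit : (∫ y in (-1:ℝ)..a, β / (y + 1) * φ y ^ 2)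
      + (∫ y in a..(1:ℝ), β / (y + 1) * φ y ^ 2)
      = ∫ y in (-1:ℝ)..1, β / (y + 1) * φ y ^ 2 :=
    intervalIntegral.integral_add_adjacent_intervals (hpot.mono_set hsub1)
      (hpot.mono_set hsub2)
  have : δ * (β * D) = β * δ * D := by ring
  linarith

end aux3

section main
variable {β : ℝ}

lemma form_lower_data (hβ : 0 < β) {φ dφ : ℝ → ℝ}
    (h : ∀ y, HasDerivAt φ (dφ y) y) (hb : φ (-1) = 0)
    (hD : IntervalIntegrable (fun y => dφ y ^ 2) volume (-1) 1)
    (hnorm : (∫ y in (-1:ℝ)..1, φ y ^ 2) = 1) :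
    (∫ t in (-1:ℝ)..1, dφ t ^ 2) / 2 - β / del0 β
      ≤ ∫ y in (-1:ℝ)..1, (dφ y ^ 2 - β / (y + 1) * φ y ^ 2) := by
  have hpot : IntervalIntegrable (fun y => β / (y + 1) * φ y ^ 2) volume (-1) 1 :=
    pot_int_neg_one h hb
  rw [intervalIntegral.integral_sub hD hpot]
  have hP := pot_integral_le h hb hD hnorm hβ (del0_pos hβ) del0_le_two
  have hD0 : 0 ≤ ∫ t in (-1:ℝ)..1, dφ t ^ 2 :=
    intervalIntegral.integral_nonneg (by norm_num) fun _ _ => sq_nonneg _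
  have hbd := beta_del0 hβ
  nlinarith [mul_le_mul_of_nonneg_right hbd hD0]

lemma mem_ray_lower (hβ : 0 < β) {r : ℝ} (hr : r ∈ rayleighSet β (-1)) :
    -(β / del0 β) ≤ r := by
  obtain ⟨φ, dφ, h, hb, _, hD, hpot, hnorm, hre⟩ := hr
  have hlow := form_lower_data hβ h hb hD hnorm
  have hD0 : 0 ≤ ∫ t in (-1:ℝ)..1, dφ t ^ 2 :=
    intervalIntegral.integral_nonneg (by norm_num) fun _ _ => sq_nonneg _
  simp only [sub_neg_eq_add] at hre
  rw [hre]; linarith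

lemma mem_lower_c (hβ : 0 < β) {c : ℝ} (hc : c < -1) {r : ℝ}
    (hr : r ∈ rayleighSet β c) : ∃ r' ∈ rayleighSet β (-1), r' ≤ r := by
  obtain ⟨φ, dφ, h, hb, ht, hD, hpotc, hnorm, hre⟩ := hr
  have hpot1 : IntervalIntegrable (fun y => β / (y - (-1)) * φ y ^ 2) volume (-1) 1 := by
    simpa [sub_neg_eq_add] using pot_int_neg_one (β := β) h hb
  refine ⟨_, ⟨φ, dφ, h, hb, ht, hD, hpot1, hnorm, rfl⟩, ?_⟩
  rw [hre]
  apply intervalIntegral.integral_mono_on (by norm_num) (hD.sub hpot1) (hD.sub hpotc)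
  intro y hy
  rcases eq_or_lt_of_le hy.1 with heq | hlt
  · rw [← heq]; simp [hb]
  · have hL : (0:ℝ) < y + 1 := by linarith
    have hLc : y + 1 ≤ y - c := by linarith
    have hdle : β / (y - c) ≤ β / (y - (-1)) := by rw [sub_neg_eq_add]; gcongr
    have := mul_le_mul_of_nonneg_right hdle (sq_nonneg (φ y))
    linarith

lemma upper_diff (hβ : 0 < β) {φ dφ : ℝ → ℝ} {c : ℝ}
    (h : ∀ y, HasDerivAt φ (dφ y) y) (hb : φ (-1) = 0)
    (hD : IntervalIntegrable (fun y => dφ y ^ 2) volume (-1) 1)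
    (hc : c < -1) {δ : ℝ} (hδ0 : 0 < δ) (hδ2 : δ ≤ 2) :
    (∫ y in (-1:ℝ)..1, (dφ y ^ 2 - β / (y - c) * φ y ^ 2))
      ≤ (∫ y in (-1:ℝ)..1, (dφ y ^ 2 - β / (y + 1) * φ y ^ 2))
        + β * (∫ t in (-1:ℝ)..1, dφ t ^ 2) * δ
        + 2 * (β * (2 * (∫ t in (-1:ℝ)..1, dφ t ^ 2)) * ((-1 - c) / (δ * δ))) := by
  have hcφ : Continuous φ := continuous_iff_continuousAt.2 fun y => (h y).continuousAt
  set D : ℝ := ∫ t in (-1:ℝ)..1, dφ t ^ 2 with hDdef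
  have hD0 : 0 ≤ D :=
    intervalIntegral.integral_nonneg (by norm_num) fun _ _ => sq_nonneg _
  have hpot1 : IntervalIntegrable (fun y => β / (y + 1) * φ y ^ 2) volume (-1) 1 :=
    pot_int_neg_one h hb
  have hpotc : IntervalIntegrable (fun y => β / (y - c) * φ y ^ 2) volume (-1) 1 :=
    pot_int_lt hc hcφ
  rw [intervalIntegral.integral_sub hD hpotc, intervalIntegral.integral_sub hD hpot1]
  have hgoal : (∫ y in (-1:ℝ)..1, β / (y + 1) * φ y ^ 2)
      - (∫ y in (-1:ℝ)..1, β / (y - c) * φ y ^ 2)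
      ≤ β * D * δ + 2 * (β * (2 * D) * ((-1 - c) / (δ * δ))) := by
    set g : ℝ → ℝ := fun y => β / (y + 1) * φ y ^ 2 - β / (y - c) * φ y ^ 2 with hg
    have hgint : IntervalIntegrable g volume (-1) 1 := hpot1.sub hpotc
    set a : ℝ := -1 + δ with ha
    have ha1 : (-1:ℝ) ≤ a := by simp [ha]; linarith
    have ha2 : a ≤ 1 := by simp [ha]; linarith
    have hsub1 : uIcc (-1:ℝ) a ⊆ uIcc (-1:ℝ) 1 := by
      rw [uIcc_of_le ha1, uIcc_of_le (by norm_num : (-1:ℝ) ≤ 1)]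
      exact Icc_subset_Icc le_rfl ha2
    have hsub2 : uIcc a (1:ℝ) ⊆ uIcc (-1:ℝ) 1 := by
      rw [uIcc_of_le ha2, uIcc_of_le (by norm_num : (-1:ℝ) ≤ 1)]
      exact Icc_subset_Icc ha1 le_rfl
    have hp1 : (∫ y in (-1:ℝ)..a, g y) ≤ δ * (β * D) := by
      have hmono := intervalIntegral.integral_mono_on ha1 (hgint.mono_set hsub1)
        (_root_.intervalIntegrable_const (c := β * D)) ?_
      · rw [intervalIntegral.integral_const, smul_eq_mul] at hmono
        calc (∫ y in (-1:ℝ)..a, g y) ≤ (a - (-1)) * (β * D) := hmono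
        _ = δ * (β * D) := by rw [ha]; ring_nf
      · intro y hy
        have hyc : (0:ℝ) < y - c := by linarith [hy.1]
        have hterm2 : 0 ≤ β / (y - c) * φ y ^ 2 := by positivity
        rcases eq_or_lt_of_le hy.1 with heq | hlt
        · rw [hg]; simp only
          rw [← heq, hb]
          simp
          positivity
        · have hL : (0:ℝ) < y + 1 := by linarith
          have hsq : φ y ^ 2 ≤ (y + 1) * D :=
            sq_le_of_deriv h hb hD y ⟨hy.1, le_trans hy.2 ha2⟩
          have h1 : β / (y + 1) * φ y ^ 2 ≤ β * D := by
            calc β / (y + 1) * φ y ^ 2 ≤ β / (y + 1) * ((y + 1) * D) :=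
                  mul_le_mul_of_nonneg_left hsq (by positivity)
            _ = β * D := by field_simp
          rw [hg]; simp only
          linarith
    have hp2 : (∫ y in a..(1:ℝ), g y) ≤ 2 * (β * (2 * D) * ((-1 - c) / (δ * δ))) := by
      set C : ℝ := β * (2 * D) * ((-1 - c) / (δ * δ)) with hC
      have hC0 : 0 ≤ C := by
        have : (0:ℝ) < -1 - c := by linarith
        positivity
      have hmono := intervalIntegral.integral_mono_on ha2 (hgint.mono_set hsub2)
        (_root_.intervalIntegrable_const (c := C)) ?_
      · rw [intervalIntegral.integral_const, smul_eq_mul] at hmono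
        have h1a : (1:ℝ) - a ≤ 2 := by rw [ha]; linarith
        calc (∫ y in a..(1:ℝ), g y) ≤ (1 - a) * C := hmono
        _ ≤ 2 * C := mul_le_mul_of_nonneg_right h1a hC0
      · intro y hy
        have hyδ : δ ≤ y + 1 := by have := hy.1; rw [ha] at this; linarith
        have hL : (0:ℝ) < y + 1 := lt_of_lt_of_le hδ0 hyδ
        have hLc : y + 1 ≤ y - c := by linarith
        have hyc : (0:ℝ) < y - c := lt_of_lt_of_le hL hLc
        have hcpos : (0:ℝ) < -1 - c := by linarith
        have e1 : g y = β * φ y ^ 2 * ((-1 - c) / ((y + 1) * (y - c))) := by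
          rw [hg]; simp only
          field_simp
          ring
        have e2 : (-1 - c) / ((y + 1) * (y - c)) ≤ (-1 - c) / (δ * δ) := by
          gcongr <;> linarith
        have e3 : φ y ^ 2 ≤ 2 * D := by
          have hsq : φ y ^ 2 ≤ (y + 1) * D :=
            sq_le_of_deriv h hb hD y ⟨le_trans ha1 hy.1, hy.2⟩
          nlinarith [hy.2]
        rw [e1, hC]
        have hq0 : 0 ≤ (-1 - c) / ((y + 1) * (y - c)) := by positivity
        nlinarith [sq_nonneg (φ y), mul_le_mul_of_nonneg_left e2 (mul_nonneg hβ.le (sq_nonneg (φ y))),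
          mul_le_mul_of_nonneg_right (mul_le_mul_of_nonneg_left e3 hβ.le) (le_trans hq0 e2)]
      -- done hp2
    have hsplit : (∫ y in (-1:ℝ)..a, g y) + (∫ y in a..(1:ℝ), g y) = ∫ y in (-1:ℝ)..1, g y :=
      intervalIntegral.integral_add_adjacent_intervals (hgint.mono_set hsub1)
        (hgint.mono_set hsub2)
    have hgsub : (∫ y in (-1:ℝ)..1, g y)
        = (∫ y in (-1:ℝ)..1, β / (y + 1) * φ y ^ 2)
          - ∫ y in (-1:ℝ)..1, β / (y - c) * φ y ^ 2 := by
      rw [hg, intervalIntegral.integral_sub hpot1 hpotc]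
    rw [← hgsub]
    linarith
  linarith

lemma ray_nonempty (hβ : 0 < β) {c : ℝ} (hc : c ≤ -1) : (rayleighSet β c).Nonempty := by
  set φ : ℝ → ℝ := fun y => Real.cos (π * y / 2) with hφ
  set dφ : ℝ → ℝ := fun y => -Real.sin (π * y / 2) * (π / 2) with hdφ
  have h : ∀ y, HasDerivAt φ (dφ y) y := by
    intro y
    have h1 : HasDerivAt (fun y : ℝ => π * y / 2) (π / 2) y := by
      simpa using ((hasDerivAt_id y).const_mul π).div_const 2
    exact (Real.hasDerivAt_cos (π * y / 2)).comp y h1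
  have hb : φ (-1) = 0 := by
    rw [hφ]; simp only
    rw [show π * (-1) / 2 = -(π/2) by ring, Real.cos_neg, Real.cos_pi_div_two]
  have ht : φ 1 = 0 := by
    rw [hφ]; simp only
    rw [show π * 1 / 2 = π/2 by ring, Real.cos_pi_div_two]
  have hcφ : Continuous φ := by
    rw [hφ]; exact Real.continuous_cos.comp (by continuity)
  have hcdφ : Continuous dφ := by
    rw [hdφ]; exact (Real.continuous_sin.comp (by continuity)).neg.mul continuous_const
  have hD : IntervalIntegrable (fun y => dφ y ^ 2) volume (-1) 1 :=
    ((hcdφ.pow 2).continuousOn).intervalIntegrable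
  have hpot : IntervalIntegrable (fun y => β / (y - c) * φ y ^ 2) volume (-1) 1 := by
    rcases eq_or_lt_of_le hc with heq | hlt
    · subst heq
      simpa [sub_neg_eq_add] using pot_int_neg_one (β := β) h hb
    · exact pot_int_lt hlt hcφ
  have hnorm : (∫ y in (-1:ℝ)..1, φ y ^ 2) = 1 := by
    have hF : ∀ y ∈ uIcc (-1:ℝ) 1,
        HasDerivAt (fun y : ℝ => y / 2 + Real.sin (π * y) / (2 * π)) (φ y ^ 2) y := by
      intro y _
      have h1 : HasDerivAt (fun y : ℝ => y / 2) (1 / 2) y := by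
        simpa using (hasDerivAt_id y).div_const 2
      have h2 : HasDerivAt (fun y : ℝ => π * y) π y := by
        simpa using (hasDerivAt_id y).const_mul π
      have h3 : HasDerivAt (fun y : ℝ => Real.sin (π * y)) (Real.cos (π * y) * π) y :=
        (Real.hasDerivAt_sin (π * y)).comp y h2
      have h4 : HasDerivAt (fun y : ℝ => Real.sin (π * y) / (2 * π))
          (Real.cos (π * y) * π / (2 * π)) y := h3.div_const (2 * π)
      have h5 := h1.add h4
      have hπ : (π : ℝ) ≠ 0 := Real.pi_ne_zero
      have hval : 1 / 2 + Real.cos (π * y) * π / (2 * π) = φ y ^ 2 := by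
        rw [hφ]; simp only
        rw [Real.cos_sq (π * y / 2), show 2 * (π * y / 2) = π * y by ring]
        field_simp
      rwa [hval] at h5
    rw [intervalIntegral.integral_eq_sub_of_hasDerivAt hF
      ((hcφ.pow 2).continuousOn.intervalIntegrable)]
    simp [Real.sin_pi]
    norm_num
  exact ⟨_, φ, dφ, h, hb, ht, hD, hpot, hnorm, rfl⟩


set_option maxHeartbeats 2000000 in
/-- For fixed `β > 0`, `λ₁(β,c) → λ₁(β,-1)` as `c → -1⁻`. -/
theorem lambda1_tendsto_left (β : ℝ) (hβ : 0 < β) :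
    Tendsto (fun c => lambda1 β c) (nhdsWithin (-1) (Set.Iio (-1)))
      (nhds (lambda1 β (-1))) := by
  have hne1 : (rayleighSet β (-1)).Nonempty := ray_nonempty hβ le_rfl
  have hbdd1 : BddBelow (rayleighSet β (-1)) :=
    ⟨-(β / del0 β), fun r hr => mem_ray_lower hβ hr⟩
  rw [Metric.tendsto_nhdsWithin_nhds]
  intro ε hε
  have hlt : sInf (rayleighSet β (-1)) < lambda1 β (-1) + ε / 3 := by
    unfold lambda1; linarith
  obtain ⟨r, hrmem, hrlt⟩ := exists_lt_of_csInf_lt hne1 hlt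
  obtain ⟨φ, dφ, h, hb, ht, hD, hpot1, hnorm, hre⟩ := hrmem
  have hcφ : Continuous φ := continuous_iff_continuousAt.2 fun y => (h y).continuousAt
  set D : ℝ := ∫ t in (-1:ℝ)..1, dφ t ^ 2 with hDdef
  have hD0 : 0 ≤ D :=
    intervalIntegral.integral_nonneg (by norm_num) fun _ _ => sq_nonneg _
  have hlow := form_lower_data hβ h hb hD hnorm
  have hre' : r = ∫ y in (-1:ℝ)..1, (dφ y ^ 2 - β / (y + 1) * φ y ^ 2) := by
    rw [hre]; congr 1; funext y; rw [sub_neg_eq_add]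
  set M : ℝ := 2 * (lambda1 β (-1) + ε / 3 + β / del0 β) with hM
  have hDM : D ≤ M := by
    rw [← hre'] at hlow
    rw [hM]; linarith
  have hM0 : 0 ≤ M := le_trans hD0 hDM
  set δ : ℝ := min (ε / (3 * (β * M + 1))) 2 with hδdef
  have hden : (0:ℝ) < β * M + 1 := by positivity
  have hδ0 : 0 < δ := lt_min (by positivity) (by norm_num)
  have hδ2 : δ ≤ 2 := min_le_right _ _
  have hterm1 : β * M * δ ≤ ε / 3 := by
    have h1 : δ ≤ ε / (3 * (β * M + 1)) := min_le_left _ _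
    have h2 : β * M * δ ≤ β * M * (ε / (3 * (β * M + 1))) :=
      mul_le_mul_of_nonneg_left h1 (by positivity)
    have h3 : β * M * (ε / (3 * (β * M + 1))) ≤ ε / 3 := by
      rw [show β * M * (ε / (3 * (β * M + 1))) = (β * M * ε) / (3 * (β * M + 1)) by ring]
      rw [div_le_div_iff₀ (by positivity) (by norm_num : (0:ℝ) < 3)]
      nlinarith [mul_nonneg (mul_nonneg hβ.le hM0) hε.le]
    linarith
  set η : ℝ := ε * δ ^ 2 / (12 * (β * M + 1)) with hη
  have hη0 : 0 < η := by positivity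
  clear_value M
  refine ⟨η, hη0, ?_⟩
  intro c hcmem hcdist
  have hc : c < -1 := hcmem
  rw [Real.dist_eq] at hcdist
  have hcd : -1 - c < η := by
    rcases abs_lt.1 hcdist with ⟨h1, h2⟩; linarith
  -- lower bound
  have hSc_ne : (rayleighSet β c).Nonempty := ray_nonempty hβ hc.le
  have hlo : lambda1 β (-1) ≤ lambda1 β c := by
    apply le_csInf hSc_ne
    intro b hm
    obtain ⟨r', hr'mem, hr'le⟩ := mem_lower_c hβ hc hm
    exact le_trans (csInf_le hbdd1 hr'mem) hr'le
  -- upper bound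
  have hpotc : IntervalIntegrable (fun y => β / (y - c) * φ y ^ 2) volume (-1) 1 :=
    pot_int_lt hc hcφ
  have hQc_mem : (∫ y in (-1:ℝ)..1, (dφ y ^ 2 - β / (y - c) * φ y ^ 2)) ∈ rayleighSet β c :=
    ⟨φ, dφ, h, hb, ht, hD, hpotc, hnorm, rfl⟩
  have hScbdd : BddBelow (rayleighSet β c) := by
    refine ⟨-(β / del0 β), fun b hm => ?_⟩
    obtain ⟨r', h1, h2⟩ := mem_lower_c hβ hc hm
    exact le_trans (mem_ray_lower hβ h1) h2
  have hup0 : lambda1 β c ≤ ∫ y in (-1:ℝ)..1, (dφ y ^ 2 - β / (y - c) * φ y ^ 2) :=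
    csInf_le hScbdd hQc_mem
  have hdiff := upper_diff hβ h hb hD hc hδ0 hδ2
  rw [← hre', ← hDdef] at hdiff
  clear_value D
  -- bound the two error terms
  have hT1 : β * D * δ ≤ ε / 3 := by
    have : β * D * δ ≤ β * M * δ :=
      mul_le_mul_of_nonneg_right (mul_le_mul_of_nonneg_left hDM hβ.le) hδ0.le
    linarith
  have hT2 : 2 * (β * (2 * D) * ((-1 - c) / (δ * δ))) ≤ ε / 3 := by
    have hcpos : 0 < -1 - c := by linarith
    have hq : (-1 - c) / (δ * δ) ≤ η / (δ * δ) := by gcongr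
    have h1 : 2 * (β * (2 * D) * ((-1 - c) / (δ * δ)))
        ≤ 2 * (β * (2 * M) * (η / (δ * δ))) := by
      have e1 : 0 ≤ (-1 - c) / (δ * δ) := by positivity
      have e2 : β * (2 * D) ≤ β * (2 * M) := by nlinarith
      nlinarith [mul_le_mul_of_nonneg_left hq (mul_nonneg hβ.le (by linarith : (0:ℝ) ≤ 2 * D))]
    have h2 : 2 * (β * (2 * M) * (η / (δ * δ))) ≤ ε / 3 := by
      rw [hη]
      have hδδ : δ * δ > 0 := by positivity
      rw [show ε * δ ^ 2 / (12 * (β * M + 1)) / (δ * δ)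
          = ε / (12 * (β * M + 1)) by field_simp]
      rw [show 2 * (β * (2 * M) * (ε / (12 * (β * M + 1))))
          = (4 * (β * M) * ε) / (12 * (β * M + 1)) by ring]
      rw [div_le_div_iff₀ (by positivity) (by norm_num : (0:ℝ) < 3)]
      nlinarith [mul_nonneg (mul_nonneg hβ.le hM0) hε.le]
    linarith
  have hup : lambda1 β c < lambda1 β (-1) + ε := by
    calc lambda1 β c ≤ _ := hup0
    _ ≤ r + β * D * δ + 2 * (β * (2 * D) * ((-1 - c) / (δ * δ))) := hdiff
    _ ≤ r + ε / 3 + ε / 3 := by linarith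
    _ < lambda1 β (-1) + ε / 3 + ε / 3 + ε / 3 := by linarith
    _ = lambda1 β (-1) + ε := by ring
  rw [Real.dist_eq, abs_lt]
  constructor <;> linarith

end main
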